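/- Suppose every relation in R has the form Z₁ a₁ = a₂ Z₂ with Z₁, Z₂ ∈ 𝒵 and a₁, a₂ ∈ A₁, and that the presented group ⟨F(𝒵) * A₁ | R⟩ arises from a set of valid relations in an overgroup as above (so that A₁ embeds into it). Then by Tietze transformations that eliminate, for each relation Z₁ a₁ = a₂ Z₂ with Z₁ ≠ Z₂, the generator Z₂ by substituting a₂^{−1} Z₁ a₁, the group ⟨F(𝒵) * A₁ | R⟩ is isomorphic to a multiple HNN-extension ⟨A₁, Z₁, …, Zₘ | Z_i^{−1} a Z_i = ψ_i(a) (1 ≤ i ≤ m, a ∈ dom(ψ_i))⟩ of the finite group A₁, where each ψ_i is a partial automorphism of A₁, i.e., an isomorphism between two subgroups of A₁. -/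

import Mathlib

/-!
Multiple HNN-extension `G = ⟨H, t₁, …, tₙ | tᵢ⁻¹ a tᵢ = φᵢ(a) (a ∈ Aᵢ)⟩`, presented
as a `PresentedGroup` on the alphabet `H ⊕ ι`.
-/

/-- Relators of the multiple HNN-extension presentation. -/
def hnnRels {H : Type*} [Group H] {ι : Type*} (A B : ι → Subgroup H)
    (φ : ∀ i, A i ≃* B i) : Set (FreeGroup (H ⊕ ι)) :=
  {r | ∃ h₁ h₂ : H, r = FreeGroup.of (Sum.inl h₁) * FreeGroup.of (Sum.inl h₂) *
        (FreeGroup.of (Sum.inl (h₁ * h₂)))⁻¹} ∪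
  {r | ∃ (i : ι) (a : A i), r = (FreeGroup.of (Sum.inr i))⁻¹ *
        FreeGroup.of (Sum.inl (a : H)) * FreeGroup.of (Sum.inr i) *
        (FreeGroup.of (Sum.inl ((φ i a : B i) : H)))⁻¹}

/-- The multiple HNN-extension of `H`. -/
abbrev MHNN {H : Type*} [Group H] {ι : Type*} (A B : ι → Subgroup H)
    (φ : ∀ i, A i ≃* B i) :=
  PresentedGroup (hnnRels A B φ)

/-- Canonical generators: `Sum.inl h` for `h ∈ H`, `Sum.inr i` for the stable letter `tᵢ`. -/
def gen {H : Type*} [Group H] {ι : Type*} (A B : ι → Subgroup H)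
    (φ : ∀ i, A i ≃* B i) (x : H ⊕ ι) : MHNN A B φ :=
  PresentedGroup.of x

/-- The element represented by the word `u₀ t_{idx 0}^{e 0} u₁ ⋯ t_{idx (ℓ-1)}^{e (ℓ-1)} u_ℓ`. -/
def wordProd {H : Type*} [Group H] {ι : Type*} (A B : ι → Subgroup H)
    (φ : ∀ i, A i ≃* B i) (ℓ : ℕ) (u : ℕ → H) (idx : ℕ → ι) (e : ℕ → ℤ) :
    MHNN A B φ :=
  gen A B φ (Sum.inl (u 0)) *
    ((List.range ℓ).map fun k =>
      gen A B φ (Sum.inr (idx k)) ^ e k * gen A B φ (Sum.inl (u (k + 1)))).prod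

/-- `side A B i e` is `A i (e)`, i.e. `A i` if `e = 1` and `B i` if `e = -1`. -/
def side {H : Type*} [Group H] {ι : Type*} (A B : ι → Subgroup H) (i : ι) (e : ℤ) :
    Subgroup H :=
  if e = 1 then A i else B i

/-- The word is reduced: exponents are `±1`, no factor `tᵢ^{-α} w tᵢ^{α}` with `w ∈ A i (α)`. -/
def ReducedWord {H : Type*} [Group H] {ι : Type*} (A B : ι → Subgroup H)
    (ℓ : ℕ) (u : ℕ → H) (idx : ℕ → ι) (e : ℕ → ℤ) : Prop :=
  (∀ k < ℓ, e k = 1 ∨ e k = -1) ∧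
  ∀ k, k + 1 < ℓ → idx k = idx (k + 1) → e k = -e (k + 1) →
    u (k + 1) ∉ side A B (idx k) (e (k + 1))


section

variable (L : Type*) [Group L] (A₁ : Subgroup L) [Finite A₁]
variable (𝒵 : Type*) [Finite 𝒵]

/-- The relators of a set `R` of relations of conjugation type `Z₁ a₁ = a₂ Z₂`
(`Z₁, Z₂ ∈ 𝒵`, `a₁, a₂ ∈ A₁`), inside the free product `F(𝒵) ∗ A₁`. -/
def conjRels (R : Set (𝒵 × A₁ × A₁ × 𝒵)) :
    Set (Monoid.Coprod (FreeGroup 𝒵) A₁) :=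
  {r | ∃ t ∈ R,
    r = Monoid.Coprod.inl (FreeGroup.of t.1) * Monoid.Coprod.inr t.2.1 *
        (Monoid.Coprod.inr t.2.2.1 * Monoid.Coprod.inl (FreeGroup.of t.2.2.2))⁻¹}

end

namespace CTP

section MHNNLemmas
variable {H : Type*} [Group H] {ι : Type*} (A B : ι → Subgroup H) (φ : ∀ i, A i ≃* B i)

theorem mk_rel_eq_one {r : FreeGroup (H ⊕ ι)} (hr : r ∈ hnnRels A B φ) :
    PresentedGroup.mk (hnnRels A B φ) r = 1 :=
  (QuotientGroup.eq_one_iff _).mpr (Subgroup.subset_normalClosure hr)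

theorem gen_inl_mul (h₁ h₂ : H) :
    gen A B φ (Sum.inl h₁) * gen A B φ (Sum.inl h₂) = gen A B φ (Sum.inl (h₁ * h₂)) := by
  have := mk_rel_eq_one A B φ (Or.inl ⟨h₁, h₂, rfl⟩)
  simp only [map_mul, map_inv] at this
  exact mul_inv_eq_one.mp this

/-- `H → MHNN` as a monoid hom. -/
def inlH : H →* MHNN A B φ where
  toFun h := gen A B φ (Sum.inl h)
  map_one' := by
    have := gen_inl_mul A B φ 1 1
    rw [mul_one] at this
    exact mul_eq_right.mp this
  map_mul' h₁ h₂ := (gen_inl_mul A B φ h₁ h₂).symm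

theorem hnn_rel (i : ι) (a : A i) :
    (gen A B φ (Sum.inr i))⁻¹ * inlH A B φ (a : H) * gen A B φ (Sum.inr i)
      = inlH A B φ ((φ i a : B i) : H) := by
  have := mk_rel_eq_one A B φ (Or.inr ⟨i, a, rfl⟩)
  simp only [map_mul, map_inv] at this
  exact mul_inv_eq_one.mp this

theorem hnn_rel' (i : ι) (a : A i) :
    gen A B φ (Sum.inr i) * inlH A B φ ((φ i a : B i) : H) * (gen A B φ (Sum.inr i))⁻¹
      = inlH A B φ (a : H) := by
  rw [← hnn_rel A B φ i a]; group

end MHNNLemmas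

theorem conj_aux {G : Type*} [Group G] {a₁ a₂ α₁ α₂ β₁ β₂ u x₁ x₂ : G}
    (h : x₁ * a₁ = a₂ * x₂) (h₁ : x₁ = α₁ * u * β₁) (h₂ : x₂ = α₂ * u * β₂) :
    u⁻¹ * (α₁⁻¹ * a₂ * α₂) * u = β₁ * a₁ * β₂⁻¹ := by
  subst h₁ h₂
  have e : u⁻¹ * (α₁⁻¹ * a₂ * α₂) * u = u⁻¹ * α₁⁻¹ * (a₂ * (α₂ * u * β₂)) * β₂⁻¹ := by group
  rw [e, ← h]; group

section Main

variable {L : Type*} [Group L] {A₁ : Subgroup L} {𝒵 : Type*}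

/-- All combinatorial data needed for the Tietze reduction. -/
structure Data (R : Set (𝒵 × A₁ × A₁ × 𝒵)) (val : 𝒵 → L) (m : ℕ) where
  cl : 𝒵 → Fin m
  rep : Fin m → 𝒵
  al : 𝒵 → A₁
  be : 𝒵 → A₁
  hvalid : ∀ t ∈ R, val t.1 * (t.2.1 : L) = (t.2.2.1 : L) * val t.2.2.2
  hclR : ∀ t ∈ R, cl t.1 = cl t.2.2.2
  hrepcl : ∀ i, cl (rep i) = i
  hLval : ∀ Z, val Z = (al Z : L) * val (rep (cl Z)) * (be Z : L)
  hG : ∀ Z, QuotientGroup.mk' (Subgroup.normalClosure (conjRels L A₁ 𝒵 R))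
      (Monoid.Coprod.inl (FreeGroup.of Z))
      = QuotientGroup.mk' _ (Monoid.Coprod.inr (al Z)) *
        QuotientGroup.mk' _ (Monoid.Coprod.inl (FreeGroup.of (rep (cl Z)))) *
        QuotientGroup.mk' _ (Monoid.Coprod.inr (be Z))
  hrep1 : ∀ i, al (rep i) = 1 ∧ be (rep i) = 1

variable {R : Set (𝒵 × A₁ × A₁ × 𝒵)} {val : 𝒵 → L} {m : ℕ} (d : Data R val m)

namespace Data

def dOf (t : 𝒵 × A₁ × A₁ × 𝒵) : A₁ := (d.al t.1)⁻¹ * t.2.2.1 * d.al t.2.2.2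
def cOf (t : 𝒵 × A₁ × A₁ × 𝒵) : A₁ := d.be t.1 * t.2.1 * (d.be t.2.2.2)⁻¹

/-- Domain subgroups. -/
def C (i : Fin m) : Subgroup A₁ :=
  Subgroup.closure {x | ∃ t ∈ R, d.cl t.1 = i ∧ x = d.dOf t}

theorem conjL {t : 𝒵 × A₁ × A₁ × 𝒵} (ht : t ∈ R) :
    (val (d.rep (d.cl t.1)))⁻¹ * ((d.dOf t : A₁) : L) * val (d.rep (d.cl t.1))
      = ((d.cOf t : A₁) : L) := by
  have h := d.hvalid t ht
  have h₁ := d.hLval t.1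
  have h₂ := d.hLval t.2.2.2
  rw [← d.hclR t ht] at h₂
  have := conj_aux h h₁ h₂
  simp only [dOf, cOf]
  push_cast
  convert this using 2

theorem memA (i : Fin m) {x : A₁} (hx : x ∈ d.C i) :
    (val (d.rep i))⁻¹ * (x : L) * val (d.rep i) ∈ A₁ := by
  induction hx using Subgroup.closure_induction with
  | mem y hy =>
    obtain ⟨t, ht, hti, rfl⟩ := hy
    subst hti
    rw [d.conjL ht]
    exact (d.cOf t).2
  | one => simpa using A₁.one_mem
  | mul x y hx hy ihx ihy =>
    have e : (val (d.rep i))⁻¹ * ((x * y : A₁) : L) * val (d.rep i)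
        = ((val (d.rep i))⁻¹ * (x : L) * val (d.rep i)) *
          ((val (d.rep i))⁻¹ * (y : L) * val (d.rep i)) := by
      push_cast; group
    rw [e]; exact A₁.mul_mem ihx ihy
  | inv x hx ihx =>
    have e : (val (d.rep i))⁻¹ * ((x⁻¹ : A₁) : L) * val (d.rep i)
        = ((val (d.rep i))⁻¹ * (x : L) * val (d.rep i))⁻¹ := by
      push_cast; group
    rw [e]; exact A₁.inv_mem ihx

/-- The partial map as a monoid hom into `A₁`. -/
def th (i : Fin m) : d.C i →* A₁ where
  toFun x := ⟨(val (d.rep i))⁻¹ * (x : L) * val (d.rep i), d.memA i x.2⟩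
  map_one' := by ext; simp
  map_mul' x y := by ext; push_cast; group

theorem th_injective (i : Fin m) : Function.Injective (d.th i) := by
  intro x y hxy
  have : ((d.th i x : A₁) : L) = ((d.th i y : A₁) : L) := by rw [hxy]
  simp only [th, MonoidHom.coe_mk, OneHom.coe_mk] at this
  ext
  exact mul_left_cancel (mul_right_cancel this)

/-- Range subgroups. -/
def D (i : Fin m) : Subgroup A₁ := (d.th i).range

/-- The partial automorphisms. -/
noncomputable def ps (i : Fin m) : d.C i ≃* d.D i :=
  MonoidHom.ofInjective (d.th_injective i)

theorem ps_coe (i : Fin m) (a : d.C i) : ((d.ps i a : d.D i) : A₁) = d.th i a :=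
  MonoidHom.ofInjective_apply _

end Data

/-- The quotient group (the presented group `⟨F(𝒵) ∗ A₁ | R⟩`). -/
abbrev GQ (R : Set (𝒵 × A₁ × A₁ × 𝒵)) :=
  Monoid.Coprod (FreeGroup 𝒵) A₁ ⧸ Subgroup.normalClosure (conjRels L A₁ 𝒵 R)

/-- Projection onto the quotient. -/
def mkG (R : Set (𝒵 × A₁ × A₁ × 𝒵)) : Monoid.Coprod (FreeGroup 𝒵) A₁ →* GQ R :=
  QuotientGroup.mk' _

/-- The copy of `A₁` in the presented group. -/
def inrG (R : Set (𝒵 × A₁ × A₁ × 𝒵)) : A₁ →* GQ R :=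
  (mkG R).comp Monoid.Coprod.inr

theorem relG {t : 𝒵 × A₁ × A₁ × 𝒵} (ht : t ∈ R) :
    mkG R (Monoid.Coprod.inl (FreeGroup.of t.1)) * inrG R t.2.1
      = inrG R t.2.2.1 * mkG R (Monoid.Coprod.inl (FreeGroup.of t.2.2.2)) := by
  have h1 : mkG R (Monoid.Coprod.inl (FreeGroup.of t.1) * Monoid.Coprod.inr t.2.1 *
      (Monoid.Coprod.inr t.2.2.1 * Monoid.Coprod.inl (FreeGroup.of t.2.2.2))⁻¹) = 1 :=
    (QuotientGroup.eq_one_iff _).mpr (Subgroup.subset_normalClosure ⟨t, ht, rfl⟩)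
  simp only [map_mul, map_inv] at h1
  exact mul_inv_eq_one.mp h1

namespace Data

/-- Stable letters inside the presented group. -/
def TG (i : Fin m) : GQ R := mkG R (Monoid.Coprod.inl (FreeGroup.of (d.rep i)))

theorem hG' (Z : 𝒵) :
    mkG R (Monoid.Coprod.inl (FreeGroup.of Z))
      = inrG R (d.al Z) * d.TG (d.cl Z) * inrG R (d.be Z) :=
  d.hG Z

theorem conjG {t : 𝒵 × A₁ × A₁ × 𝒵} (ht : t ∈ R) :
    (d.TG (d.cl t.1))⁻¹ * inrG R (d.dOf t) * d.TG (d.cl t.1) = inrG R (d.cOf t) := by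
  have h := relG ht
  have h₁ := d.hG' t.1
  have h₂ := d.hG' t.2.2.2
  rw [← d.hclR t ht] at h₂
  have key := conj_aux h h₁ h₂
  simp only [dOf, cOf, map_mul, map_inv]
  convert key using 2

theorem conjG_closure (i : Fin m) {x : A₁} (hx : x ∈ d.C i) :
    (d.TG i)⁻¹ * inrG R x * d.TG i
      = inrG R ⟨(val (d.rep i))⁻¹ * (x : L) * val (d.rep i), d.memA i hx⟩ := by
  induction hx using Subgroup.closure_induction with
  | mem y hy =>
    obtain ⟨t, ht, hti, rfl⟩ := hy
    subst hti
    rw [d.conjG ht]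
    congr 1
    ext
    exact (d.conjL ht).symm
  | one =>
    have : (⟨(val (d.rep i))⁻¹ * ((1 : A₁) : L) * val (d.rep i), d.memA i (one_mem _)⟩ :
        A₁) = 1 := by ext; simp
    rw [this]
    simp
  | mul x y hx hy ihx ihy =>
    have e : (⟨(val (d.rep i))⁻¹ * ((x * y : A₁) : L) * val (d.rep i),
        d.memA i (mul_mem hx hy)⟩ : A₁)
        = ⟨(val (d.rep i))⁻¹ * (x : L) * val (d.rep i), d.memA i hx⟩ *
          ⟨(val (d.rep i))⁻¹ * (y : L) * val (d.rep i), d.memA i hy⟩ := by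
      ext; push_cast; group
    rw [e, map_mul, map_mul, ← ihx, ← ihy]
    group
  | inv x hx ihx =>
    have e : (⟨(val (d.rep i))⁻¹ * ((x⁻¹ : A₁) : L) * val (d.rep i),
        d.memA i (inv_mem hx)⟩ : A₁)
        = (⟨(val (d.rep i))⁻¹ * (x : L) * val (d.rep i), d.memA i hx⟩ : A₁)⁻¹ := by
      ext; push_cast; group
    rw [e, map_inv, map_inv, ← ihx]
    group

theorem conjG_th (i : Fin m) (a : d.C i) :
    (d.TG i)⁻¹ * inrG R (a : A₁) * d.TG i = inrG R (d.th i a) :=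
  d.conjG_closure i a.2

/-- The homomorphism from the HNN extension to the presented group. -/
noncomputable def Psi : MHNN d.C d.D d.ps →* GQ R :=
  PresentedGroup.toGroup
    (f := Sum.elim (fun h : A₁ => inrG R h) fun i => d.TG i)
    (by
      rintro r (⟨h₁, h₂, rfl⟩ | ⟨i, a, rfl⟩)
      · simp only [map_mul, map_inv, FreeGroup.lift_apply_of, Sum.elim_inl]
        rw [mul_inv_eq_one, ← map_mul]
      · simp only [map_mul, map_inv, FreeGroup.lift_apply_of, Sum.elim_inl, Sum.elim_inr]
        rw [mul_inv_eq_one, d.ps_coe]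
        exact d.conjG_th i a)

theorem Psi_gen (x : A₁ ⊕ Fin m) :
    d.Psi (gen d.C d.D d.ps x) = Sum.elim (fun h : A₁ => inrG R h) (fun i => d.TG i) x :=
  PresentedGroup.toGroup.of _

theorem Psi_inlH (h : A₁) : d.Psi (inlH d.C d.D d.ps h) = inrG R h :=
  d.Psi_gen (Sum.inl h)

/-- Images of the generators `Z ∈ 𝒵` in the HNN extension. -/
noncomputable def fZ (Z : 𝒵) : MHNN d.C d.D d.ps :=
  inlH d.C d.D d.ps (d.al Z) * gen d.C d.D d.ps (Sum.inr (d.cl Z)) * inlH d.C d.D d.ps (d.be Z)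

/-- The homomorphism from the free product to the HNN extension. -/
noncomputable def Phi0 : Monoid.Coprod (FreeGroup 𝒵) A₁ →* MHNN d.C d.D d.ps :=
  Monoid.Coprod.lift (FreeGroup.lift d.fZ) (inlH d.C d.D d.ps)

theorem Phi0_rel {r : Monoid.Coprod (FreeGroup 𝒵) A₁} (hr : r ∈ conjRels L A₁ 𝒵 R) :
    d.Phi0 r = 1 := by
  obtain ⟨t, ht, rfl⟩ := hr
  simp only [Phi0, map_mul, map_inv, Monoid.Coprod.lift_apply_inl,
    Monoid.Coprod.lift_apply_inr, FreeGroup.lift_apply_of]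
  rw [mul_inv_eq_one]
  have hcl2 : d.cl t.2.2.2 = d.cl t.1 := (d.hclR t ht).symm
  set i := d.cl t.1 with hi
  set a : d.C i := ⟨d.dOf t, Subgroup.subset_closure ⟨t, ht, rfl, rfl⟩⟩ with ha
  have hpsa : ((d.ps i a : d.D i) : A₁) = d.cOf t := by
    rw [d.ps_coe]
    ext
    exact d.conjL ht
  have key := hnn_rel' d.C d.D d.ps i a
  rw [hpsa] at key
  have key2 : gen d.C d.D d.ps (Sum.inr i) * inlH d.C d.D d.ps (d.cOf t)
      = inlH d.C d.D d.ps (d.dOf t) * gen d.C d.D d.ps (Sum.inr i) := by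
    rw [← key]; group
  have e1 : (d.be t.1 : A₁) * t.2.1 = d.cOf t * d.be t.2.2.2 := by
    simp only [cOf]; group
  have e2 : (t.2.2.1 : A₁) * d.al t.2.2.2 = (d.al t.1 : A₁) * d.dOf t := by
    simp only [dOf]; group
  simp only [fZ]
  rw [hcl2]
  set g := gen d.C d.D d.ps (Sum.inr i)
  set I := inlH d.C d.D d.ps with hI
  calc I (d.al t.1) * g * I (d.be t.1) * I t.2.1
      = I (d.al t.1) * g * I ((d.be t.1 : A₁) * t.2.1) := by rw [map_mul]; group
    _ = I (d.al t.1) * g * (I (d.cOf t) * I (d.be t.2.2.2)) := by rw [e1, map_mul]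
    _ = I (d.al t.1) * (g * I (d.cOf t)) * I (d.be t.2.2.2) := by group
    _ = I (d.al t.1) * (I (d.dOf t) * g) * I (d.be t.2.2.2) := by rw [key2]
    _ = I ((d.al t.1 : A₁) * d.dOf t) * g * I (d.be t.2.2.2) := by rw [map_mul]; group
    _ = I ((t.2.2.1 : A₁) * d.al t.2.2.2) * g * I (d.be t.2.2.2) := by rw [e2]
    _ = I t.2.2.1 * (I (d.al t.2.2.2) * g * I (d.be t.2.2.2)) := by rw [map_mul]; group

theorem Phi0_nc : Subgroup.normalClosure (conjRels L A₁ 𝒵 R) ≤ d.Phi0.ker :=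
  Subgroup.normalClosure_le_normal fun _ hr => d.Phi0_rel hr

/-- The homomorphism from the presented group to the HNN extension. -/
noncomputable def Phi : GQ R →* MHNN d.C d.D d.ps :=
  QuotientGroup.lift _ d.Phi0 fun _ hx => d.Phi0_nc hx

theorem Phi_mk (x : Monoid.Coprod (FreeGroup 𝒵) A₁) : d.Phi (mkG R x) = d.Phi0 x := rfl

theorem Phi_inl (Z : 𝒵) :
    d.Phi (mkG R (Monoid.Coprod.inl (FreeGroup.of Z))) = d.fZ Z := by
  rw [d.Phi_mk]
  simp [Phi0]

theorem Phi_inr (a : A₁) :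
    d.Phi (mkG R (Monoid.Coprod.inr a)) = inlH d.C d.D d.ps a := by
  rw [d.Phi_mk]
  simp [Phi0]

theorem psi_phi : d.Psi.comp d.Phi = MonoidHom.id (GQ R) := by
  apply QuotientGroup.monoidHom_ext
  apply Monoid.Coprod.hom_ext
  · ext Z
    show d.Psi (d.Phi (mkG R (Monoid.Coprod.inl (FreeGroup.of Z))))
        = mkG R (Monoid.Coprod.inl (FreeGroup.of Z))
    rw [d.Phi_inl, fZ, map_mul, map_mul, d.Psi_inlH, d.Psi_inlH, d.Psi_gen, d.hG' Z]
    rfl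
  · ext a
    show d.Psi (d.Phi (mkG R (Monoid.Coprod.inr a))) = mkG R (Monoid.Coprod.inr a)
    rw [d.Phi_inr, d.Psi_inlH]
    rfl

theorem phi_psi : d.Phi.comp d.Psi = MonoidHom.id (MHNN d.C d.D d.ps) := by
  apply PresentedGroup.ext
  rintro (h | i)
  · show d.Phi (d.Psi (gen d.C d.D d.ps (Sum.inl h))) = gen d.C d.D d.ps (Sum.inl h)
    rw [d.Psi_gen]
    show d.Phi (mkG R (Monoid.Coprod.inr h)) = _
    rw [d.Phi_inr]
    rfl
  · show d.Phi (d.Psi (gen d.C d.D d.ps (Sum.inr i))) = gen d.C d.D d.ps (Sum.inr i)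
    rw [d.Psi_gen]
    show d.Phi (mkG R (Monoid.Coprod.inl (FreeGroup.of (d.rep i)))) = _
    rw [d.Phi_inl, fZ, (d.hrep1 i).1, (d.hrep1 i).2, d.hrepcl, map_one, one_mul, mul_one]

/-- The isomorphism. -/
noncomputable def equiv : GQ R ≃* MHNN d.C d.D d.ps :=
  MonoidHom.toMulEquiv d.Phi d.Psi d.psi_phi d.phi_psi

theorem equiv_inr (a : A₁) :
    d.equiv (QuotientGroup.mk'
        (Subgroup.normalClosure (conjRels L A₁ 𝒵 R)) (Monoid.Coprod.inr a))
      = gen d.C d.D d.ps (Sum.inl a) := by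
  show d.Phi (mkG R (Monoid.Coprod.inr a)) = _
  rw [d.Phi_inr]
  rfl

end Data
end Main
end CTP

section

variable (L : Type*) [Group L] (A₁ : Subgroup L) [Finite A₁]
variable (𝒵 : Type*) [Finite 𝒵]

/-- If every relation in `R` has conjugation type `Z₁ a₁ = a₂ Z₂` and the
relations are valid in an overgroup `L ⊇ A₁` via `val : 𝒵 → L`, then the presented group
`⟨F(𝒵) ∗ A₁ | R⟩` is isomorphic, via an isomorphism restricting to the identity on `A₁`,
to a multiple HNN-extension `⟨A₁, Z₁, …, Zₘ | Zᵢ⁻¹ a Zᵢ = ψᵢ(a) (a ∈ dom ψᵢ)⟩` of the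
finite group `A₁`, where each `ψᵢ` is a partial automorphism of `A₁` (an isomorphism
`ψᵢ : Cᵢ ≃* Dᵢ` between subgroups `Cᵢ, Dᵢ` of `A₁`). -/
theorem conj_type_presentation_iso_hnn
    (R : Set (𝒵 × A₁ × A₁ × 𝒵)) (val : 𝒵 → L)
    (hvalid : ∀ t ∈ R, val t.1 * (t.2.1 : L) = (t.2.2.1 : L) * val t.2.2.2) :
    ∃ (m : ℕ) (C D : Fin m → Subgroup A₁) (ψ : ∀ i, C i ≃* D i)
      (e : (Monoid.Coprod (FreeGroup 𝒵) A₁ ⧸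
          Subgroup.normalClosure (conjRels L A₁ 𝒵 R)) ≃* MHNN C D ψ),
      ∀ a : A₁,
        e (QuotientGroup.mk' (Subgroup.normalClosure (conjRels L A₁ 𝒵 R))
            (Monoid.Coprod.inr a)) = gen C D ψ (Sum.inl a) := by
  classical
  set N := Subgroup.normalClosure (conjRels L A₁ 𝒵 R) with hN
  let r₀ : 𝒵 → 𝒵 → Prop := fun Z Z' => ∃ a₁ a₂ : A₁, (Z, a₁, a₂, Z') ∈ R
  let s : Setoid 𝒵 := Relation.EqvGen.setoid r₀
  have : Finite (Quotient s) := Quotient.finite s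
  obtain ⟨m, ⟨ε⟩⟩ := Finite.exists_equiv_fin (Quotient s)
  let cl : 𝒵 → Fin m := fun Z => ε (Quotient.mk s Z)
  let rep : Fin m → 𝒵 := fun i => (ε.symm i).out
  have hrepcl : ∀ i, cl (rep i) = i := by
    intro i
    show ε (Quotient.mk s (ε.symm i).out) = i
    rw [Quotient.out_eq]
    simp
  have hP : ∀ Z Z', Relation.EqvGen r₀ Z Z' → ∃ a b : A₁,
      (QuotientGroup.mk' N (Monoid.Coprod.inl (FreeGroup.of Z)) =
        QuotientGroup.mk' N (Monoid.Coprod.inr a) *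
        QuotientGroup.mk' N (Monoid.Coprod.inl (FreeGroup.of Z')) *
        QuotientGroup.mk' N (Monoid.Coprod.inr b)) ∧
      val Z = (a : L) * val Z' * (b : L) := by
    intro Z Z' h
    induction h with
    | rel x y hxy =>
      obtain ⟨a₁, a₂, ht⟩ := hxy
      refine ⟨a₂, a₁⁻¹, ?_, ?_⟩
      · have h := CTP.relG (R := R) (t := (x, a₁, a₂, y)) ht
        simp only [map_inv]
        rw [eq_mul_inv_iff_mul_eq]
        exact h
      · have h := hvalid (x, a₁, a₂, y) ht
        push_cast
        rw [eq_mul_inv_iff_mul_eq]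
        exact h
    | refl x => exact ⟨1, 1, by simp, by simp⟩
    | symm x y _ ih =>
      obtain ⟨a, b, h1, h2⟩ := ih
      refine ⟨a⁻¹, b⁻¹, ?_, ?_⟩
      · simp only [map_inv]
        rw [h1]; group
      · push_cast; rw [h2]; group
    | trans x y z _ _ ih1 ih2 =>
      obtain ⟨a, b, h1, h2⟩ := ih1
      obtain ⟨c, e, h3, h4⟩ := ih2
      refine ⟨a * c, e * b, ?_, ?_⟩
      · simp only [map_mul]
        rw [h1, h3]; group
      · push_cast; rw [h2, h4]; group
  have hex : ∀ Z, ∃ a b : A₁,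
      (QuotientGroup.mk' N (Monoid.Coprod.inl (FreeGroup.of Z)) =
        QuotientGroup.mk' N (Monoid.Coprod.inr a) *
        QuotientGroup.mk' N (Monoid.Coprod.inl (FreeGroup.of (rep (cl Z)))) *
        QuotientGroup.mk' N (Monoid.Coprod.inr b)) ∧
      val Z = (a : L) * val (rep (cl Z)) * (b : L) ∧
      (Z = rep (cl Z) → a = 1 ∧ b = 1) := by
    intro Z
    by_cases hZ : Z = rep (cl Z)
    · refine ⟨1, 1, ?_, ?_, fun _ => ⟨rfl, rfl⟩⟩
      · rw [← hZ]; simp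
      · rw [← hZ]; simp
    · have hq : Relation.EqvGen r₀ Z (rep (cl Z)) := by
        have h : Quotient.mk s Z = Quotient.mk s (rep (cl Z)) := by
          show _ = Quotient.mk s (ε.symm (ε (Quotient.mk s Z))).out
          rw [Quotient.out_eq]
          simp
        exact Quotient.exact h
      obtain ⟨a, b, h1, h2⟩ := hP Z (rep (cl Z)) hq
      exact ⟨a, b, h1, h2, fun h => absurd h hZ⟩
  choose al be hGc hLc h1c using hex
  have hclR : ∀ t ∈ R, cl t.1 = cl t.2.2.2 := by
    intro t ht
    have h : Quotient.mk s t.1 = Quotient.mk s t.2.2.2 :=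
      Quotient.sound (Relation.EqvGen.rel _ _ ⟨t.2.1, t.2.2.1, ht⟩)
    show ε (Quotient.mk s t.1) = ε (Quotient.mk s t.2.2.2)
    rw [h]
  let d : CTP.Data R val m :=
    { cl := cl, rep := rep, al := al, be := be,
      hvalid := hvalid, hclR := hclR, hrepcl := hrepcl,
      hLval := hLc, hG := hGc,
      hrep1 := fun i => h1c (rep i) (by rw [hrepcl i]) }
  exact ⟨m, d.C, d.D, d.ps, d.equiv, d.equiv_inr⟩

end
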